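/- Let A = (a_{ij}) ∈ M_n(ℝ₊) with a_{11} ≤ a_{22} ≤ ⋯ ≤ a_{nn}, and let 0 ≤ i < n be an integer. Then δ_{i+1}(A) ≥ δ_i(A) · a_{n−i, n−i}, where δ_0(A) = 1 and for 1 ≤ k ≤ n, δ_k(A) is the maximum of the max permanents of all k×k principal submatrices of A. -/

import Mathlib

open Matrix

/-- Max-algebra matrix product: `(A ⊗ B) i j = max_p (A i p * B p j)`. -/
noncomputable def maxMul {n m l : ℕ} (A : Matrix (Fin n) (Fin m) ℝ)
    (B : Matrix (Fin m) (Fin l) ℝ) : Matrix (Fin n) (Fin l) ℝ :=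
  Matrix.of fun i j => ⨆ p, A i p * B p j

/-- Max trace: `tr⊗(A) = max_i A i i`. -/
noncomputable def trMax {n : ℕ} (A : Matrix (Fin n) (Fin n) ℝ) : ℝ := ⨆ i, A i i

/-- The set 𝒳_{n×k} of nonnegative `n×k` matrices with `Xᵀ ⊗ X = I_k`. -/
def Xset (n k : ℕ) : Set (Matrix (Fin n) (Fin k) ℝ) :=
  {X | (∀ i j, 0 ≤ X i j) ∧ maxMul Xᵀ X = 1}

/-- The max `k`-numerical range `W_max^k(A) = { tr⊗(Xᵀ⊗A⊗X) : X ∈ 𝒳_{n×k} }`. -/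
noncomputable def Wmax {n : ℕ} (k : ℕ) (A : Matrix (Fin n) (Fin n) ℝ) : Set ℝ :=
  {z | ∃ X ∈ Xset n k, z = trMax (maxMul (maxMul Xᵀ A) X)}

/-- Max permanent of the principal submatrix of `A` on a subset `S`. -/
noncomputable def maxPermSub {n : ℕ} (A : Matrix (Fin n) (Fin n) ℝ)
    (S : Finset (Fin n)) : ℝ :=
  ⨆ σ : Equiv.Perm {x : Fin n // x ∈ S}, ∏ i : {x : Fin n // x ∈ S}, A i.1 (σ i).1

/-- Coefficient `δ_k(A)` of the characteristic maxpolynomial: `δ_0 = 1` and for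
`1 ≤ k ≤ n`, `δ_k = max of the max permanents of all k×k principal submatrices`. -/
noncomputable def delta {n : ℕ} (A : Matrix (Fin n) (Fin n) ℝ) (k : ℕ) : ℝ :=
  if k = 0 then 1
  else ⨆ S : {S : Finset (Fin n) // S.card = k}, maxPermSub A S.1

lemma le_maxPermSub_insert {n : ℕ} (A : Matrix (Fin n) (Fin n) ℝ)
    (S : Finset (Fin n)) (j : Fin n) (hj : j ∉ S)
    (σ : Equiv.Perm {x : Fin n // x ∈ S}) :
    (∏ i : {x : Fin n // x ∈ S}, A i.1 (σ i).1) * A j j ≤ maxPermSub A (insert j S) := by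
  classical
  set τ : Equiv.Perm (Fin n) := σ.extendDomain (Equiv.refl {x : Fin n // x ∈ S}) with hτ
  have hτS : ∀ x (hx : x ∈ S), τ x = (σ ⟨x, hx⟩).1 := by
    intro x hx
    simp [hτ, Equiv.Perm.extendDomain_apply_subtype σ (Equiv.refl _) hx]
  have hτj : τ j = j := Equiv.Perm.extendDomain_apply_not_subtype σ (Equiv.refl _) hj
  have h : ∀ x : Fin n, x ∈ insert j S ↔ τ x ∈ insert j S := by
    intro x
    by_cases hx : x ∈ S
    · simp [Finset.mem_insert_of_mem hx, hτS x hx,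
        Finset.mem_insert_of_mem (σ ⟨x, hx⟩).2]
    · have hfix : τ x = x :=
        Equiv.Perm.extendDomain_apply_not_subtype σ (Equiv.refl _) hx
      rw [hfix]
  set σ' : Equiv.Perm {x : Fin n // x ∈ insert j S} := τ.subtypePerm (fun x => (h x).symm) with hσ'
  have key : (∏ i : {x : Fin n // x ∈ insert j S}, A i.1 (σ' i).1)
      = (∏ i : {x : Fin n // x ∈ S}, A i.1 (σ i).1) * A j j := by
    have h1 : (∏ i : {x : Fin n // x ∈ insert j S}, A i.1 (σ' i).1)
        = ∏ x ∈ insert j S, A x (τ x) := by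
      rw [← Finset.prod_coe_sort (insert j S) (fun x => A x (τ x))]
      exact Finset.prod_congr rfl fun x _ => rfl
    rw [h1, Finset.prod_insert hj, hτj,
      ← Finset.prod_coe_sort S (fun x => A x (τ x))]
    rw [mul_comm]
    congr 1
    exact Finset.prod_congr rfl fun x _ => by rw [hτS x.1 x.2]
  rw [← key, maxPermSub]
  exact le_ciSup (f := fun σ'' : Equiv.Perm {x : Fin n // x ∈ insert j S} =>
    ∏ i : {x : Fin n // x ∈ insert j S}, A i.1 (σ'' i).1)
    (Set.Finite.bddAbove (Set.finite_range _)) σ'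

lemma maxPermSub_mul_le {n : ℕ} (A : Matrix (Fin n) (Fin n) ℝ)
    (hA : ∀ i j, 0 ≤ A i j)
    (hdiag : ∀ i j : Fin n, i ≤ j → A i i ≤ A j j)
    (i : ℕ) (hi : i < n) (S : Finset (Fin n)) (hS : S.card = i) :
    maxPermSub A S * A ⟨n - 1 - i, by have := hi; omega⟩ ⟨n - 1 - i, by have := hi; omega⟩ ≤ delta A (i + 1) := by
  classical
  set a : Fin n := ⟨n - 1 - i, by have := hi; omega⟩ with ha
  -- find j ∉ S with a ≤ j
  have hcard : S.card < (Finset.Ici a).card := by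
    rw [hS, Fin.card_Ici]
    simp only [ha]
    omega
  have hnsub : ¬ (Finset.Ici a ⊆ S) :=
    fun hsub => absurd (Finset.card_le_card hsub) (not_le.mpr hcard)
  obtain ⟨j, hjI, hjS⟩ := Finset.not_subset.mp hnsub
  have haj : a ≤ j := Finset.mem_Ici.mp hjI
  have hAaj : A a a ≤ A j j := hdiag a j haj
  obtain ⟨σ0, hσ0⟩ := exists_eq_ciSup_of_finite
    (f := fun σ : Equiv.Perm {x : Fin n // x ∈ S} =>
      ∏ i : {x : Fin n // x ∈ S}, A i.1 (σ i).1)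
  have hprod0 : 0 ≤ ∏ i : {x : Fin n // x ∈ S}, A i.1 (σ0 i).1 :=
    Finset.prod_nonneg fun _ _ => hA _ _
  have step1 : maxPermSub A S * A a a
      ≤ (∏ i : {x : Fin n // x ∈ S}, A i.1 (σ0 i).1) * A j j := by
    rw [maxPermSub, ← hσ0]
    exact mul_le_mul_of_nonneg_left hAaj hprod0
  have step2 := le_maxPermSub_insert A S j hjS σ0
  have step3 : maxPermSub A (insert j S) ≤ delta A (i + 1) := by
    rw [delta, if_neg (Nat.succ_ne_zero i)]
    exact le_ciSup (f := fun T : {T : Finset (Fin n) // T.card = i + 1} =>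
      maxPermSub A T.1) (Set.Finite.bddAbove (Set.finite_range _))
      ⟨insert j S, by rw [Finset.card_insert_of_notMem hjS, hS]⟩
  exact le_trans step1 (le_trans step2 step3)

lemma maxPermSub_empty {n : ℕ} (A : Matrix (Fin n) (Fin n) ℝ) :
    maxPermSub A (∅ : Finset (Fin n)) = 1 := by
  rw [maxPermSub]
  have : ∀ σ : Equiv.Perm {x : Fin n // x ∈ (∅ : Finset (Fin n))},
      (∏ i : {x : Fin n // x ∈ (∅ : Finset (Fin n))}, A i.1 (σ i).1) = 1 := by
    intro σ
    apply Finset.prod_of_isEmpty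
  simp only [this]
  exact ciSup_const

private theorem stmt_17_aux {n : ℕ} (hn : 0 < n) (A : Matrix (Fin n) (Fin n) ℝ)
    (hA : ∀ i j, 0 ≤ A i j)
    (hdiag : ∀ i j : Fin n, i ≤ j → A i i ≤ A j j)
    (i : ℕ) (hi : i < n) :
    delta A i * A ⟨n - 1 - i, by have := hi; omega⟩ ⟨n - 1 - i, by have := hi; omega⟩ ≤ delta A (i + 1) := by
  classical
  rcases Nat.eq_zero_or_pos i with h0 | hpos
  · subst h0
    have := maxPermSub_mul_le A hA hdiag 0 hi ∅ rfl
    rw [maxPermSub_empty] at this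
    rw [show (delta A 0) = 1 from if_pos rfl]
    exact this
  · rw [delta, if_neg (Nat.pos_iff_ne_zero.mp hpos)]
    have hne : Nonempty {S : Finset (Fin n) // S.card = i} := by
      obtain ⟨t, _, ht⟩ := Finset.exists_subset_card_eq
        (s := (Finset.univ : Finset (Fin n))) (n := i) (by simpa using hi.le)
      exact ⟨⟨t, ht⟩⟩
    obtain ⟨S0, hS0⟩ := exists_eq_ciSup_of_finite
      (f := fun S : {S : Finset (Fin n) // S.card = i} => maxPermSub A S.1)
    rw [← hS0]
    exact maxPermSub_mul_le A hA hdiag i hi S0.1 S0.2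


/-- Let `A ∈ M_n(ℝ₊)` with nondecreasing diagonal
`a_{11} ≤ ⋯ ≤ a_{nn}` and let `0 ≤ i < n`. Then `δ_{i+1}(A) ≥ δ_i(A) · a_{n−i,n−i}`
(1-based indexing; `a_{n−i,n−i}` is the `(n−1−i)`-th diagonal entry 0-based). -/
theorem stmt_17 {n : ℕ} (hn : 0 < n) (A : Matrix (Fin n) (Fin n) ℝ)
    (hA : ∀ i j, 0 ≤ A i j)
    (hdiag : ∀ i j : Fin n, i ≤ j → A i i ≤ A j j)
    (i : ℕ) (hi : i < n) :
    delta A i * A ⟨n - 1 - i, by omega⟩ ⟨n - 1 - i, by omega⟩ ≤ delta A (i + 1) := by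
  exact stmt_17_aux hn A hA hdiag i hi
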